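/- Let xs : ℕ → ℝ be a sequence of real numbers, each of which has a signed digit representation, let M : ℕ → ℕ be monotone, and suppose xs converges to a real number x with modulus M, i.e., for all p and all n ≥ M p one has |x - xs n| ≤ 2^{-p}. Then x has a signed digit representation. -/

import Mathlib

/-- A real number has a signed digit representation if it is the sum of a
series of digits in {-1, 0, 1} weighted by powers of 1/2. -/
def HasSDR (x : ℝ) : Prop :=
  ∃ d : ℕ → ℤ, (∀ i, d i = -1 ∨ d i = 0 ∨ d i = 1) ∧
    x = ∑' i : ℕ, (d i : ℝ) / 2 ^ (i + 1)

lemma sdr_summable (d : ℕ → ℤ) (hd : ∀ i, d i = -1 ∨ d i = 0 ∨ d i = 1) :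
    Summable (fun i : ℕ => (d i : ℝ) / 2 ^ (i + 1)) := by
  apply Summable.of_norm_bounded (g := fun i : ℕ => (1/2 : ℝ) ^ (i+1))
  · exact (summable_geometric_of_lt_one (by norm_num) (by norm_num)).comp_injective
      (add_left_injective 1)
  · intro i
    have : |(d i : ℝ)| ≤ 1 := by rcases hd i with h | h | h <;> simp [h]
    rw [Real.norm_eq_abs, abs_div, abs_pow, abs_two, div_pow, one_pow]
    gcongr
  
lemma sdr_abs_le_one {x : ℝ} (h : HasSDR x) : |x| ≤ 1 := by
  obtain ⟨d, hd, hx⟩ := h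
  have hsum := sdr_summable d hd
  calc |x| = |∑' i : ℕ, (d i : ℝ) / 2 ^ (i + 1)| := by rw [hx]
    _ ≤ ∑' i : ℕ, |(d i : ℝ) / 2 ^ (i + 1)| := by
        have h := norm_tsum_le_tsum_norm (f := fun i : ℕ => (d i : ℝ) / 2 ^ (i + 1))
          (by simpa only [Real.norm_eq_abs] using hsum.abs)
        simpa only [Real.norm_eq_abs] using h
    _ ≤ ∑' i : ℕ, (1/2 : ℝ) ^ (i + 1) := by
        apply Summable.tsum_le_tsum _ hsum.abs
        · exact (summable_geometric_of_lt_one (by norm_num) (by norm_num)).comp_injective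
            (add_left_injective 1)
        · intro i
          have : |(d i : ℝ)| ≤ 1 := by rcases hd i with h | h | h <;> simp [h]
          rw [abs_div, abs_pow, abs_two, div_pow, one_pow]
          gcongr
    _ = 1 := by
        have := tsum_geometric_of_lt_one (r := (1/2:ℝ)) (by norm_num) (by norm_num)
        calc ∑' i : ℕ, (1/2:ℝ) ^ (i+1) = (1/2) * ∑' i : ℕ, (1/2:ℝ) ^ i := by
              rw [tsum_mul_left.symm]; congr 1; funext i; rw [pow_succ]; ring
          _ = 1 := by rw [this]; norm_num

noncomputable def sdrSeq (x : ℝ) : ℕ → ℝ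
  | 0 => x
  | n + 1 => 2 * sdrSeq x n - (if 0 ≤ sdrSeq x n then 1 else -1)

noncomputable def sdrDig (x : ℝ) (n : ℕ) : ℤ := if 0 ≤ sdrSeq x n then 1 else -1

lemma sdrSeq_abs_le {x : ℝ} (hx : |x| ≤ 1) : ∀ n, |sdrSeq x n| ≤ 1 := by
  intro n
  induction n with
  | zero => exact hx
  | succ n ih =>
    rw [abs_le] at ih ⊢
    simp only [sdrSeq]
    split <;> constructor <;> nlinarith [ih.1, ih.2]

lemma sdrSeq_eq (x : ℝ) : ∀ n : ℕ,
    x - ∑ i ∈ Finset.range n, (sdrDig x i : ℝ) / 2 ^ (i + 1) = sdrSeq x n / 2 ^ n := by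
  intro n
  induction n with
  | zero => simp [sdrSeq]
  | succ n ih =>
    rw [Finset.sum_range_succ]
    have : x - (∑ i ∈ Finset.range n, (sdrDig x i : ℝ) / 2 ^ (i + 1)
        + (sdrDig x n : ℝ) / 2 ^ (n + 1))
        = sdrSeq x n / 2 ^ n - (sdrDig x n : ℝ) / 2 ^ (n + 1) := by
      rw [← ih]; ring
    rw [this]
    simp only [sdrSeq, sdrDig]
    split <;> · push_cast; rw [pow_succ]; field_simp

lemma hasSDR_of_abs_le_one {x : ℝ} (hx : |x| ≤ 1) : HasSDR x := by
  refine ⟨sdrDig x, fun i => ?_, ?_⟩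
  · unfold sdrDig; split
    · right; right; rfl
    · left; rfl
  · have hd : ∀ i, sdrDig x i = -1 ∨ sdrDig x i = 0 ∨ sdrDig x i = 1 := by
      intro i; unfold sdrDig; split
      · right; right; rfl
      · left; rfl
    have hsum := sdr_summable (sdrDig x) hd
    have h1 : Filter.Tendsto (fun n => ∑ i ∈ Finset.range n, (sdrDig x i : ℝ) / 2 ^ (i + 1))
        Filter.atTop (nhds (∑' i : ℕ, (sdrDig x i : ℝ) / 2 ^ (i + 1))) :=
      hsum.hasSum.tendsto_sum_nat
    have h2 : Filter.Tendsto (fun n => ∑ i ∈ Finset.range n, (sdrDig x i : ℝ) / 2 ^ (i + 1))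
        Filter.atTop (nhds x) := by
      rw [show nhds x = nhds (x - 0) by simp]
      have : (fun n => ∑ i ∈ Finset.range n, (sdrDig x i : ℝ) / 2 ^ (i + 1))
          = fun n => x - sdrSeq x n / 2 ^ n := by
        funext n; have := sdrSeq_eq x n; linarith
      rw [this]
      apply Filter.Tendsto.sub tendsto_const_nhds
      have hb : ∀ n : ℕ, |sdrSeq x n / 2 ^ n| ≤ (1/2 : ℝ) ^ n := by
        intro n
        rw [abs_div, abs_pow, abs_two, div_pow, one_pow]
        gcongr
        exact sdrSeq_abs_le hx n
      apply squeeze_zero_norm hb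
      exact tendsto_pow_atTop_nhds_zero_of_lt_one (by norm_num) (by norm_num)
    exact tendsto_nhds_unique h2 h1

theorem sdr_lim (xs : ℕ → ℝ) (x : ℝ) (M : ℕ → ℕ)
    (hsdr : ∀ n : ℕ, HasSDR (xs n)) (hM : Monotone M)
    (hconv : ∀ p : ℕ, ∀ n : ℕ, M p ≤ n → |x - xs n| ≤ 1 / 2 ^ p) :
    HasSDR x := by
  apply hasSDR_of_abs_le_one
  have key : ∀ p : ℕ, |x| ≤ 1 + 1 / 2 ^ p := by
    intro p
    have h1 := hconv p (M p) le_rfl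
    have h2 := sdr_abs_le_one (hsdr (M p))
    calc |x| = |x - xs (M p) + xs (M p)| := by ring_nf
      _ ≤ |x - xs (M p)| + |xs (M p)| := abs_add_le _ _
      _ ≤ 1 / 2 ^ p + 1 := add_le_add h1 h2
      _ = 1 + 1 / 2 ^ p := by ring
  have htend : Filter.Tendsto (fun p : ℕ => 1 + 1 / 2 ^ p : ℕ → ℝ)
      Filter.atTop (nhds 1) := by
    rw [show nhds (1:ℝ) = nhds (1 + 0) by simp]
    apply Filter.Tendsto.add tendsto_const_nhds
    simpa [one_div] using
      tendsto_pow_atTop_nhds_zero_of_lt_one (by norm_num : (0:ℝ) ≤ 1/2) (by norm_num) |>.congr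
        (fun n => by rw [div_pow]; norm_num)
  exact ge_of_tendsto htend (Filter.Eventually.of_forall key)
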